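/- arXiv:0911.3531 — 3 statements merged into one kernel-verified Lean document; each statement's English description precedes it below -/
import Mathlib

section
/- Let X_1, ..., X_m be independent random variables each taking values in (0,1). Define Q^L = -2 log(∏_{j=1}^m X_j), Q^R = -2 log(∏_{j=1}^m (1 - X_j)), and Q^C = max(Q^L, Q^R). Then for any real A, letting P_L = Pr(Q^L > A), P_R = Pr(Q^R > A), and P_T = Pr(Q^C > A), we have P_L + P_R - P_L·P_R ≤ P_T ≤ P_L + P_R. -/
open MeasureTheory ProbabilityTheory Real Finset

private lemma aux_integrable01 {α : Type*} [MeasurableSpace α] (ν : Measure α)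
    [IsFiniteMeasure ν] {f : α → ℝ} (hf : Measurable f) (h0 : ∀ x, 0 ≤ f x)
    (h1 : ∀ x, f x ≤ 1) : Integrable f ν := by
  refine Integrable.mono' (integrable_const 1) hf.aestronglyMeasurable
    (Filter.Eventually.of_forall fun x => ?_)
  rw [Real.norm_eq_abs, abs_le]
  constructor <;> nlinarith [h0 x, h1 x]

private lemma aux_cheb {ν : Measure ℝ} [IsProbabilityMeasure ν] {u v : ℝ → ℝ}
    (hu : Measurable u) (hv : Measurable v)
    (hu0 : ∀ x, 0 ≤ u x) (hu1 : ∀ x, u x ≤ 1)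
    (hv0 : ∀ x, 0 ≤ v x) (hv1 : ∀ x, v x ≤ 1)
    (hua : Antitone u) (hvm : Monotone v) :
    ∫ x, u x * v x ∂ν ≤ (∫ x, u x ∂ν) * ∫ x, v x ∂ν := by
  have key : 0 ≤ ∫ p : ℝ × ℝ, (u p.1 - u p.2) * (v p.2 - v p.1) ∂(ν.prod ν) := by
    refine integral_nonneg fun p => ?_
    simp only [Pi.zero_apply]
    rcases le_total p.1 p.2 with h | h
    · exact mul_nonneg (sub_nonneg.2 (hua h)) (sub_nonneg.2 (hvm h))
    · have h1 := hua h; have h2 := hvm h; nlinarith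
  have hmeq : (fun p : ℝ × ℝ => (u p.1 - u p.2) * (v p.2 - v p.1))
      = fun p : ℝ × ℝ => u p.1 * v p.2 + u p.2 * v p.1
        - (u p.1 * v p.1 + u p.2 * v p.2) := by
    funext p; ring
  have hint : ∀ (a b : ℝ → ℝ), Measurable a → Measurable b → (∀ x, 0 ≤ a x) →
      (∀ x, a x ≤ 1) → (∀ x, 0 ≤ b x) → (∀ x, b x ≤ 1) →
      Integrable (fun p : ℝ × ℝ => a p.1 * b p.2) (ν.prod ν) := by
    intro a b ha hb ha0 ha1 hb0 hb1
    exact aux_integrable01 _ ((ha.comp measurable_fst).mul (hb.comp measurable_snd))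
      (fun p => mul_nonneg (ha0 _) (hb0 _))
      (fun p => mul_le_one₀ (ha1 _) (hb0 _) (hb1 _))
  have i1 := hint u v hu hv hu0 hu1 hv0 hv1
  have i2 := hint v u hv hu hv0 hv1 hu0 hu1
  have i2' : Integrable (fun p : ℝ × ℝ => u p.2 * v p.1) (ν.prod ν) := by
    have : (fun p : ℝ × ℝ => u p.2 * v p.1) = fun p : ℝ × ℝ => v p.1 * u p.2 := by
      funext p; ring
    rw [this]; exact i2
  have i3 := hint (fun x => u x * v x) (fun _ => 1) (hu.mul hv) measurable_const
    (fun x => mul_nonneg (hu0 x) (hv0 x)) (fun x => mul_le_one₀ (hu1 x) (hv0 x) (hv1 x))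
    (fun _ => zero_le_one) (fun _ => le_refl 1)
  have i3' : Integrable (fun p : ℝ × ℝ => u p.1 * v p.1) (ν.prod ν) := by
    have : (fun p : ℝ × ℝ => u p.1 * v p.1)
        = fun p : ℝ × ℝ => (u p.1 * v p.1) * (1 : ℝ) := by funext p; ring
    rw [this]; exact i3
  have i4 := hint (fun _ => 1) (fun x => u x * v x) measurable_const (hu.mul hv)
    (fun _ => zero_le_one) (fun _ => le_refl 1)
    (fun x => mul_nonneg (hu0 x) (hv0 x)) (fun x => mul_le_one₀ (hu1 x) (hv0 x) (hv1 x))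
  have i4' : Integrable (fun p : ℝ × ℝ => u p.2 * v p.2) (ν.prod ν) := by
    have : (fun p : ℝ × ℝ => u p.2 * v p.2)
        = fun p : ℝ × ℝ => (1 : ℝ) * (u p.2 * v p.2) := by funext p; ring
    rw [this]; exact i4
  have isub := integral_sub (μ := ν.prod ν)
    (f := fun p : ℝ × ℝ => u p.1 * v p.2 + u p.2 * v p.1)
    (g := fun p : ℝ × ℝ => u p.1 * v p.1 + u p.2 * v p.2)
    (i1.add i2') (i3'.add i4')
  have iadd1 := integral_add (μ := ν.prod ν)
    (f := fun p : ℝ × ℝ => u p.1 * v p.2)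
    (g := fun p : ℝ × ℝ => u p.2 * v p.1) i1 i2'
  have iadd2 := integral_add (μ := ν.prod ν)
    (f := fun p : ℝ × ℝ => u p.1 * v p.1)
    (g := fun p : ℝ × ℝ => u p.2 * v p.2) i3' i4'
  rw [hmeq, isub, iadd1, iadd2] at key
  have e1 : ∫ p : ℝ × ℝ, u p.1 * v p.2 ∂(ν.prod ν) = (∫ x, u x ∂ν) * ∫ x, v x ∂ν :=
    integral_prod_mul u v
  have e2 : ∫ p : ℝ × ℝ, u p.2 * v p.1 ∂(ν.prod ν) = (∫ x, u x ∂ν) * ∫ x, v x ∂ν := by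
    have : (fun p : ℝ × ℝ => u p.2 * v p.1) = fun p : ℝ × ℝ => v p.1 * u p.2 := by
      funext p; ring
    rw [this, integral_prod_mul v u]; ring
  have e3 : ∫ p : ℝ × ℝ, u p.1 * v p.1 ∂(ν.prod ν) = ∫ x, u x * v x ∂ν := by
    have : (fun p : ℝ × ℝ => u p.1 * v p.1)
        = fun p : ℝ × ℝ => (u p.1 * v p.1) * (1 : ℝ) := by funext p; ring
    rw [this, integral_prod_mul (fun x => u x * v x) (fun _ => (1 : ℝ))]
    simp
  have e4 : ∫ p : ℝ × ℝ, u p.2 * v p.2 ∂(ν.prod ν) = ∫ x, u x * v x ∂ν := by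
    have : (fun p : ℝ × ℝ => u p.2 * v p.2)
        = fun p : ℝ × ℝ => (1 : ℝ) * (u p.2 * v p.2) := by funext p; ring
    rw [this, integral_prod_mul (fun _ => (1 : ℝ)) (fun x => u x * v x)]
    simp
  rw [e1, e2, e3, e4] at key
  linarith

private lemma aux_cons_le_cons_head {m : ℕ} {t t' : ℝ} (y : Fin m → ℝ) (h : t ≤ t') :
    (Fin.cons t y : Fin (m+1) → ℝ) ≤ Fin.cons t' y := by
  intro i
  refine Fin.cases ?_ (fun j => ?_) i <;> simp [h]

private lemma aux_cons_le_cons_tail {m : ℕ} (t : ℝ) {y y' : Fin m → ℝ} (h : y ≤ y') :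
    (Fin.cons t y : Fin (m+1) → ℝ) ≤ Fin.cons t y' := by
  intro i
  refine Fin.cases ?_ (fun j => ?_) i
  · simp
  · simp [h j]

private lemma aux_harris : ∀ (m : ℕ) (ν : Fin m → Measure ℝ),
    (∀ i, IsProbabilityMeasure (ν i)) → ∀ (f g : (Fin m → ℝ) → ℝ),
    Measurable f → Measurable g → (∀ x, 0 ≤ f x) → (∀ x, f x ≤ 1) →
    (∀ x, 0 ≤ g x) → (∀ x, g x ≤ 1) → Antitone f → Monotone g →
    ∫ x, f x * g x ∂(Measure.pi ν)
      ≤ (∫ x, f x ∂(Measure.pi ν)) * ∫ x, g x ∂(Measure.pi ν) := by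
  intro m
  induction m with
  | zero =>
    intro ν hν f g hf hg hf0 hf1 hg0 hg1 hfa hgm
    haveI := fun i => hν i
    haveI : IsProbabilityMeasure (Measure.pi ν) := inferInstance
    have hconst : ∀ (F : (Fin 0 → ℝ) → ℝ), F = fun _ => F (fun i => i.elim0) := by
      intro F; funext x
      congr 1
      exact Subsingleton.elim _ _
    rw [hconst f, hconst g]
    simp
  | succ m ih =>
    intro ν hν f g hf hg hf0 hf1 hg0 hg1 hfa hgm
    haveI := fun i => hν i
    set ν0 : Measure ℝ := ν 0 with hν0
    set ν' : Fin m → Measure ℝ := fun j => ν ((0 : Fin (m+1)).succAbove j) with hν'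
    haveI : ∀ j, IsProbabilityMeasure (ν' j) := fun j => hν _
    set π' : Measure (Fin m → ℝ) := Measure.pi ν' with hπ'
    haveI : IsProbabilityMeasure π' := inferInstance
    haveI : IsProbabilityMeasure (Measure.pi ν) := inferInstance
    have mp : MeasurePreserving (MeasurableEquiv.piFinSuccAbove (fun _ => ℝ) 0)
        (Measure.pi ν) (ν0.prod π') := measurePreserving_piFinSuccAbove ν 0
    set e := MeasurableEquiv.piFinSuccAbove (fun _ : Fin (m+1) => ℝ) 0 with he
    have hsymm : ∀ (p : ℝ × (Fin m → ℝ)), e.symm p = Fin.cons p.1 p.2 := by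
      intro p
      simp [he, MeasurableEquiv.piFinSuccAbove_symm_apply, Fin.insertNth_zero, Fin.consEquiv]
    -- Fubini for any bounded measurable F
    have fub : ∀ (F : (Fin (m+1) → ℝ) → ℝ), Measurable F → (∀ x, 0 ≤ F x) →
        (∀ x, F x ≤ 1) →
        ∫ x, F x ∂(Measure.pi ν) = ∫ t, (∫ y, F (Fin.cons t y) ∂π') ∂ν0 := by
      intro F hF hF0 hF1
      have h1 : ∫ x, F x ∂(Measure.pi ν) = ∫ p, F (e.symm p) ∂(ν0.prod π') := by
        rw [← (mp.symm e).integral_comp e.symm.measurableEmbedding F]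
      have hFe : Measurable fun p : ℝ × (Fin m → ℝ) => F (e.symm p) :=
        hF.comp e.symm.measurable
      have hint : Integrable (fun p : ℝ × (Fin m → ℝ) => F (e.symm p)) (ν0.prod π') :=
        aux_integrable01 _ hFe (fun p => hF0 _) (fun p => hF1 _)
      rw [h1, integral_prod _ hint]
      congr 1
      funext t
      congr 1
      funext y
      rw [hsymm]
    -- slice integrals
    set U : ℝ → ℝ := fun t => ∫ y, f (Fin.cons t y) ∂π' with hU
    set V : ℝ → ℝ := fun t => ∫ y, g (Fin.cons t y) ∂π' with hV
    have hconsm : Measurable fun p : ℝ × (Fin m → ℝ) => (Fin.cons p.1 p.2 : Fin (m+1) → ℝ) := by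
      have : (fun p : ℝ × (Fin m → ℝ) => (Fin.cons p.1 p.2 : Fin (m+1) → ℝ))
          = fun p => e.symm p := by funext p; rw [hsymm]
      rw [this]; exact e.symm.measurable
    have hUmeas : Measurable U := by
      have : StronglyMeasurable fun p : ℝ × (Fin m → ℝ) => f (Fin.cons p.1 p.2) :=
        (hf.comp hconsm).stronglyMeasurable
      exact this.integral_prod_right'.measurable
    have hVmeas : Measurable V := by
      have : StronglyMeasurable fun p : ℝ × (Fin m → ℝ) => g (Fin.cons p.1 p.2) :=
        (hg.comp hconsm).stronglyMeasurable
      exact this.integral_prod_right'.measurable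
    have hbd : ∀ (F : (Fin (m+1) → ℝ) → ℝ), Measurable F → (∀ x, 0 ≤ F x) →
        (∀ x, F x ≤ 1) → ∀ t : ℝ,
        0 ≤ (∫ y, F (Fin.cons t y) ∂π') ∧ (∫ y, F (Fin.cons t y) ∂π') ≤ 1 := by
      intro F hF hF0 hF1 t
      constructor
      · exact integral_nonneg fun y => hF0 _
      · calc ∫ y, F (Fin.cons t y) ∂π' ≤ ∫ _, (1 : ℝ) ∂π' := by
              refine integral_mono ?_ (integrable_const 1) (fun y => hF1 _)
              exact aux_integrable01 _ (hF.comp ((hconsm).comp (measurable_const.prodMk measurable_id)))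
                (fun y => hF0 _) (fun y => hF1 _)
            _ = 1 := by simp
    have hU0 : ∀ t, 0 ≤ U t := fun t => (hbd f hf hf0 hf1 t).1
    have hU1 : ∀ t, U t ≤ 1 := fun t => (hbd f hf hf0 hf1 t).2
    have hV0 : ∀ t, 0 ≤ V t := fun t => (hbd g hg hg0 hg1 t).1
    have hV1 : ∀ t, V t ≤ 1 := fun t => (hbd g hg hg0 hg1 t).2
    have hint_slice : ∀ (F : (Fin (m+1) → ℝ) → ℝ), Measurable F → (∀ x, 0 ≤ F x) →
        (∀ x, F x ≤ 1) → ∀ t : ℝ, Integrable (fun y => F (Fin.cons t y)) π' := by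
      intro F hF hF0 hF1 t
      exact aux_integrable01 _ (hF.comp ((hconsm).comp (measurable_const.prodMk measurable_id)))
        (fun y => hF0 _) (fun y => hF1 _)
    have hUa : Antitone U := by
      intro t t' htt
      exact integral_mono (hint_slice f hf hf0 hf1 t') (hint_slice f hf hf0 hf1 t)
        (fun y => hfa (aux_cons_le_cons_head y htt))
    have hVm : Monotone V := by
      intro t t' htt
      exact integral_mono (hint_slice g hg hg0 hg1 t) (hint_slice g hg hg0 hg1 t')
        (fun y => hgm (aux_cons_le_cons_head y htt))
    have hfg0 : ∀ x, 0 ≤ f x * g x := fun x => mul_nonneg (hf0 x) (hg0 x)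
    have hfg1 : ∀ x, f x * g x ≤ 1 := fun x => mul_le_one₀ (hf1 x) (hg0 x) (hg1 x)
    calc ∫ x, f x * g x ∂(Measure.pi ν)
        = ∫ t, (∫ y, f (Fin.cons t y) * g (Fin.cons t y) ∂π') ∂ν0 :=
          fub _ (hf.mul hg) hfg0 hfg1
      _ ≤ ∫ t, U t * V t ∂ν0 := by
          refine integral_mono ?_ ?_ (fun t => ?_)
          · exact aux_integrable01 _ (by
              have : StronglyMeasurable fun p : ℝ × (Fin m → ℝ) =>
                  f (Fin.cons p.1 p.2) * g (Fin.cons p.1 p.2) :=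
                ((hf.comp hconsm).mul (hg.comp hconsm)).stronglyMeasurable
              exact this.integral_prod_right'.measurable)
              (fun t => (hbd _ (hf.mul hg) hfg0 hfg1 t).1)
              (fun t => (hbd _ (hf.mul hg) hfg0 hfg1 t).2)
          · exact aux_integrable01 _ (hUmeas.mul hVmeas)
              (fun t => mul_nonneg (hU0 t) (hV0 t))
              (fun t => mul_le_one₀ (hU1 t) (hV0 t) (hV1 t))
          · exact ih ν' (fun j => hν _) (fun y => f (Fin.cons t y)) (fun y => g (Fin.cons t y))
              (hf.comp ((hconsm).comp (measurable_const.prodMk measurable_id)))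
              (hg.comp ((hconsm).comp (measurable_const.prodMk measurable_id)))
              (fun y => hf0 _) (fun y => hf1 _) (fun y => hg0 _) (fun y => hg1 _)
              (fun y y' hy => hfa (aux_cons_le_cons_tail t hy))
              (fun y y' hy => hgm (aux_cons_le_cons_tail t hy))
      _ ≤ (∫ t, U t ∂ν0) * ∫ t, V t ∂ν0 :=
          aux_cheb hUmeas hVmeas hU0 hU1 hV0 hV1 hUa hVm
      _ = (∫ x, f x ∂(Measure.pi ν)) * ∫ x, g x ∂(Measure.pi ν) := by
          rw [fub f hf hf0 hf1, fub g hg hg0 hg1]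

private lemma aux_map_pi {Ω : Type*} [MeasurableSpace Ω] (μ : Measure Ω)
    [IsProbabilityMeasure μ] (m : ℕ) (X : Fin m → Ω → ℝ)
    (hmeas : ∀ j, Measurable (X j))
    (hindep : iIndepFun X μ) :
    μ.map (fun ω i => X i ω) = Measure.pi (fun i => μ.map (X i)) := by
  haveI : ∀ i, IsProbabilityMeasure (μ.map (X i)) :=
    fun i => Measure.isProbabilityMeasure_map (hmeas i).aemeasurable
  have hY : Measurable (fun ω i => X i ω) := measurable_pi_lambda _ fun i => hmeas i
  refine (Measure.pi_eq fun s hs => ?_).symm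
  rw [Measure.map_apply hY (MeasurableSet.univ_pi hs)]
  have hpre : (fun ω i => X i ω) ⁻¹' (Set.univ.pi s) = ⋂ i ∈ Finset.univ, X i ⁻¹' s i := by
    ext ω
    simp [Set.mem_univ_pi]
  rw [hpre, hindep.measure_inter_preimage_eq_mul Finset.univ (fun i _ => hs i)]
  refine Finset.prod_congr rfl fun i _ => ?_
  rw [Measure.map_apply (hmeas i) (hs i)]

/-- Theorem 2 of Owen (2009): Bonferroni bounds for Pearson's concordant statistic.
If `X 1, ..., X m` are independent random variables with values in `(0,1)`,
`Q^L = -2 log ∏ X j`, `Q^R = -2 log ∏ (1 - X j)` and `Q^C = max (Q^L, Q^R)`, then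
`P_L + P_R - P_L * P_R ≤ P_T ≤ P_L + P_R` where `P_L = Pr(Q^L > A)`,
`P_R = Pr(Q^R > A)` and `P_T = Pr(Q^C > A)`. -/
theorem stmt0 {Ω : Type*} [MeasurableSpace Ω] (μ : Measure Ω) [IsProbabilityMeasure μ]
    (m : ℕ) (X : Fin m → Ω → ℝ)
    (hmeas : ∀ j, Measurable (X j))
    (hindep : iIndepFun X μ)
    (hrange : ∀ j ω, X j ω ∈ Set.Ioo (0 : ℝ) 1)
    (QL QR QC : Ω → ℝ)
    (hQL : ∀ ω, QL ω = -2 * Real.log (∏ j, X j ω))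
    (hQR : ∀ ω, QR ω = -2 * Real.log (∏ j, (1 - X j ω)))
    (hQC : ∀ ω, QC ω = max (QL ω) (QR ω))
    (A : ℝ)
    (PL PR PT : ℝ)
    (hPL : PL = (μ {ω | QL ω > A}).toReal)
    (hPR : PR = (μ {ω | QR ω > A}).toReal)
    (hPT : PT = (μ {ω | QC ω > A}).toReal) :
    PL + PR - PL * PR ≤ PT ∧ PT ≤ PL + PR := by
  classical
  set a : ℝ := Real.exp (-(A/2)) with ha
  -- the clamping function
  set c : ℝ → ℝ := fun t => min (max t 0) 1 with hc
  have hcmono : Monotone c := (monotone_id.max monotone_const).min monotone_const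
  have hcmeas : Measurable c := (measurable_id.max measurable_const).min measurable_const
  have hc0 : ∀ t, 0 ≤ c t := fun t => le_min (le_max_right t 0) zero_le_one
  have hc1 : ∀ t, c t ≤ 1 := fun t => min_le_right _ _
  have hcid : ∀ t : ℝ, t ∈ Set.Ioo (0:ℝ) 1 → c t = t := by
    intro t ht
    simp only [hc]
    rw [max_eq_left ht.1.le, min_eq_left ht.2.le]
  -- sets in the product space
  set L : Set (Fin m → ℝ) := {x | ∏ i, c (x i) < a} with hL
  set V : Set (Fin m → ℝ) := {x | ∏ i, (1 - c (x i)) < a} with hV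
  have hprodmeas : Measurable fun x : Fin m → ℝ => ∏ i, c (x i) :=
    Finset.measurable_prod _ fun i _ => hcmeas.comp (measurable_pi_apply i)
  have hprodmeas' : Measurable fun x : Fin m → ℝ => ∏ i, (1 - c (x i)) :=
    Finset.measurable_prod _ fun i _ =>
      (measurable_const.sub (hcmeas.comp (measurable_pi_apply i)))
  have hLmeas : MeasurableSet L := measurableSet_lt hprodmeas measurable_const
  have hVmeas : MeasurableSet V := measurableSet_lt hprodmeas' measurable_const
  -- indicator functions
  set f : (Fin m → ℝ) → ℝ := L.indicator (fun _ => 1) with hf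
  set g : (Fin m → ℝ) → ℝ := V.indicator (fun _ => 1) with hg
  have hfmeas : Measurable f := measurable_const.indicator hLmeas
  have hgmeas : Measurable g := measurable_const.indicator hVmeas
  have hf01 : ∀ x, 0 ≤ f x ∧ f x ≤ 1 := by
    intro x; simp only [hf, Set.indicator_apply]; split <;> norm_num
  have hg01 : ∀ x, 0 ≤ g x ∧ g x ≤ 1 := by
    intro x; simp only [hg, Set.indicator_apply]; split <;> norm_num
  have hfa : Antitone f := by
    intro x y hxy
    simp only [hf, Set.indicator_apply]
    by_cases hy : y ∈ L
    · have hx : x ∈ L := by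
        simp only [hL, Set.mem_setOf_eq] at hy ⊢
        calc ∏ i, c (x i) ≤ ∏ i, c (y i) :=
              Finset.prod_le_prod (fun i _ => hc0 _) (fun i _ => hcmono (hxy i))
          _ < a := hy
      simp [hx, hy]
    · simp only [if_neg hy]
      split <;> norm_num
  have hgm : Monotone g := by
    intro x y hxy
    simp only [hg, Set.indicator_apply]
    by_cases hx : x ∈ V
    · have hy : y ∈ V := by
        simp only [hV, Set.mem_setOf_eq] at hx ⊢
        calc ∏ i, (1 - c (y i)) ≤ ∏ i, (1 - c (x i)) :=
              Finset.prod_le_prod (fun i _ => by linarith [hc1 (y i)])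
                (fun i _ => by linarith [hcmono (hxy i)])
          _ < a := hx
      simp [hx, hy]
    · simp only [if_neg hx]
      split <;> norm_num
  -- pushforward measure
  set Y : Ω → (Fin m → ℝ) := fun ω i => X i ω with hY
  have hYmeas : Measurable Y := measurable_pi_lambda _ fun i => hmeas i
  set Pi0 : Measure (Fin m → ℝ) := Measure.pi (fun i => μ.map (X i)) with hPi0
  have hmap : μ.map Y = Pi0 := aux_map_pi μ m X hmeas hindep
  haveI : ∀ i, IsProbabilityMeasure (μ.map (X i)) :=
    fun i => Measure.isProbabilityMeasure_map (hmeas i).aemeasurable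
  haveI : IsProbabilityMeasure Pi0 := by rw [hPi0]; infer_instance
  -- event identifications
  set S : Set Ω := {ω | QL ω > A} with hS
  set T : Set Ω := {ω | QR ω > A} with hT
  have hSL : S = Y ⁻¹' L := by
    ext ω
    have hPpos : (0:ℝ) < ∏ j, X j ω := Finset.prod_pos fun j _ => (hrange j ω).1
    have : (∏ i, c (X i ω)) = ∏ j, X j ω :=
      Finset.prod_congr rfl fun i _ => hcid _ (hrange i ω)
    simp only [hS, Set.mem_setOf_eq, Set.mem_preimage, hL, Set.mem_setOf_eq, hY, this]
    rw [hQL ω]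
    constructor
    · intro h
      rw [ha, ← Real.log_lt_iff_lt_exp hPpos]
      linarith
    · intro h
      rw [ha, ← Real.log_lt_iff_lt_exp hPpos] at h
      linarith
  have hTV : T = Y ⁻¹' V := by
    ext ω
    have hPpos : (0:ℝ) < ∏ j, (1 - X j ω) :=
      Finset.prod_pos fun j _ => by linarith [(hrange j ω).2]
    have : (∏ i, (1 - c (X i ω))) = ∏ j, (1 - X j ω) :=
      Finset.prod_congr rfl fun i _ => by rw [hcid _ (hrange i ω)]
    simp only [hT, Set.mem_setOf_eq, Set.mem_preimage, hV, Set.mem_setOf_eq, hY, this]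
    rw [hQR ω]
    constructor
    · intro h
      rw [ha, ← Real.log_lt_iff_lt_exp hPpos]
      linarith
    · intro h
      rw [ha, ← Real.log_lt_iff_lt_exp hPpos] at h
      linarith
  have hSmeas : MeasurableSet S := hSL ▸ hYmeas hLmeas
  have hTmeas : MeasurableSet T := hTV ▸ hYmeas hVmeas
  have hCunion : {ω | QC ω > A} = S ∪ T := by
    ext ω
    simp only [Set.mem_setOf_eq, Set.mem_union, hS, hT, Set.mem_setOf_eq, hQC ω,
      gt_iff_lt, lt_max_iff]
  -- measures via the product measure
  have hmuS : μ S = Pi0 L := by rw [hSL, ← hmap, Measure.map_apply hYmeas hLmeas]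
  have hmuT : μ T = Pi0 V := by rw [hTV, ← hmap, Measure.map_apply hYmeas hVmeas]
  have hmuST : μ (S ∩ T) = Pi0 (L ∩ V) := by
    have : S ∩ T = Y ⁻¹' (L ∩ V) := by rw [hSL, hTV]; rfl
    rw [this, ← hmap, Measure.map_apply hYmeas (hLmeas.inter hVmeas)]
  -- Harris inequality
  have harris := aux_harris m (fun i => μ.map (X i)) (fun i => inferInstance) f g
    hfmeas hgmeas (fun x => (hf01 x).1) (fun x => (hf01 x).2)
    (fun x => (hg01 x).1) (fun x => (hg01 x).2) hfa hgm
  have hfg_ind : (fun x => f x * g x) = (L ∩ V).indicator (fun _ => (1:ℝ)) := by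
    funext x
    simp only [hf, hg, Set.indicator_apply, Set.mem_inter_iff]
    by_cases hx : x ∈ L <;> by_cases hy : x ∈ V <;> simp [hx, hy]
  have hif : ∫ x, f x ∂Pi0 = (Pi0 L).toReal := by
    rw [hf, integral_indicator_const (1:ℝ) hLmeas]; simp; rfl
  have hig : ∫ x, g x ∂Pi0 = (Pi0 V).toReal := by
    rw [hg, integral_indicator_const (1:ℝ) hVmeas]; simp; rfl
  have hifg : ∫ x, f x * g x ∂Pi0 = (Pi0 (L ∩ V)).toReal := by
    rw [hfg_ind, integral_indicator_const (1:ℝ) (hLmeas.inter hVmeas)]; simp; rfl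
  rw [hif, hig, hifg] at harris
  -- put everything together
  have hIE : μ (S ∪ T) + μ (S ∩ T) = μ S + μ T := measure_union_add_inter S hTmeas
  have hfin : ∀ W : Set Ω, μ W ≠ ⊤ := fun W => measure_ne_top μ W
  have hIE' : (μ (S ∪ T)).toReal + (μ (S ∩ T)).toReal = (μ S).toReal + (μ T).toReal := by
    rw [← ENNReal.toReal_add (hfin _) (hfin _), ← ENNReal.toReal_add (hfin _) (hfin _), hIE]
  have hPT' : PT = (μ (S ∪ T)).toReal := by rw [hPT, hCunion]
  have hPL' : PL = (μ S).toReal := hPL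
  have hPR' : PR = (μ T).toReal := hPR
  have hkey : (μ (S ∩ T)).toReal ≤ PL * PR := by
    rw [hPL', hPR', hmuS, hmuT, hmuST]
    exact harris
  have hnn : 0 ≤ (μ (S ∩ T)).toReal := ENNReal.toReal_nonneg
  constructor
  · rw [hPT']; linarith [hIE', hkey]
  · rw [hPT']; linarith [hIE', hnn]
end

section
/- Let X = (X_1, ..., X_m) have independent components, each taking values in (0,1). Let Q^L = -2 log(∏_{j=1}^m X_j) and Q^R = -2 log(∏_{j=1}^m (1 - X_j)). Then for any A_L > 0 and A_R > 0, Pr(Q^L > A_L and Q^R > A_R) ≤ Pr(Q^L > A_L) · Pr(Q^R > A_R). -/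
open MeasureTheory ProbabilityTheory Real Finset

open scoped ENNReal


lemma owen_rearrange {a b c d : ℝ≥0∞} (ha : a ≤ 1) (hc : c ≤ a) (hb : b ≤ d) :
    a * b + c * d ≤ a * d + c * b := by
  obtain ⟨e, rfl⟩ : ∃ e, a = c + e := ⟨a - c, (add_tsub_cancel_of_le hc).symm⟩
  calc (c + e) * b + c * d = (c * b + c * d) + e * b := by ring
    _ ≤ (c * b + c * d) + e * d := by gcongr
    _ = (c + e) * d + c * b := by ring

lemma owen_harris_one {α : Type*} [MeasurableSpace α] [LinearOrder α]
    (ν : Measure α) [IsProbabilityMeasure ν]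
    (f g : α → ℝ≥0∞) (hf : Measurable f) (hg : Measurable g)
    (hf1 : ∀ x, f x ≤ 1) (hg1 : ∀ x, g x ≤ 1)
    (hfa : Antitone f) (hgm : Monotone g) :
    ∫⁻ x, f x * g x ∂ν ≤ (∫⁻ x, f x ∂ν) * ∫⁻ x, g x ∂ν := by
  have key : ∀ x y, f x * g x + f y * g y ≤ f x * g y + f y * g x := by
    have base : ∀ x y, x ≤ y → f x * g x + f y * g y ≤ f x * g y + f y * g x := by
      intro x y hxy
      exact owen_rearrange (hf1 x) (hfa hxy) (hgm hxy)
    intro x y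
    rcases le_total x y with h | h
    · exact base x y h
    · have := base y x h
      calc f x * g x + f y * g y = f y * g y + f x * g x := by ring
        _ ≤ f y * g x + f x * g y := base y x h
        _ = f x * g y + f y * g x := by ring
  have h1 : (∫⁻ x, f x * g x ∂ν) + ∫⁻ x, f x * g x ∂ν
      = ∫⁻ x, ∫⁻ y, (f x * g x + f y * g y) ∂ν ∂ν := by
    have : ∀ x, ∫⁻ y, (f x * g x + f y * g y) ∂ν
        = f x * g x + ∫⁻ y, f y * g y ∂ν := by
      intro x
      rw [lintegral_add_left measurable_const, lintegral_const, measure_univ, mul_one]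
    simp_rw [this]
    rw [lintegral_add_right _ measurable_const, lintegral_const, measure_univ, mul_one]
  have h2 : ∫⁻ x, ∫⁻ y, (f x * g y + f y * g x) ∂ν ∂ν
      = (∫⁻ x, f x ∂ν) * (∫⁻ x, g x ∂ν) + (∫⁻ x, f x ∂ν) * ∫⁻ x, g x ∂ν := by
    have : ∀ x, ∫⁻ y, (f x * g y + f y * g x) ∂ν
        = f x * (∫⁻ y, g y ∂ν) + (∫⁻ y, f y ∂ν) * g x := by
      intro x
      rw [lintegral_add_left (hg.const_mul _), lintegral_const_mul _ hg,
        lintegral_mul_const _ hf]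
    simp_rw [this]
    rw [lintegral_add_right _ (hg.const_mul _),
      lintegral_mul_const _ hf, lintegral_const_mul _ hg]
  have hmono : (∫⁻ x, f x * g x ∂ν) + ∫⁻ x, f x * g x ∂ν
      ≤ (∫⁻ x, f x ∂ν) * (∫⁻ x, g x ∂ν) + (∫⁻ x, f x ∂ν) * ∫⁻ x, g x ∂ν := by
    rw [h1, ← h2]
    exact lintegral_mono fun x => lintegral_mono fun y => key x y
  rw [← two_mul, ← two_mul] at hmono
  exact (ENNReal.mul_le_mul_iff_right (by norm_num) (by norm_num)).mp hmono

lemma owen_insertNth_mono {m : ℕ} :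
    Monotone (fun w : ℝ × (Fin m → ℝ) => Fin.insertNth (α := fun _ => ℝ) 0 w.1 w.2) := by
  intro w w' hw k
  refine Fin.cases ?_ ?_ k
  · simpa using hw.1
  · intro j
    have h1 : Fin.insertNth (α := fun _ => ℝ) 0 w.1 w.2 j.succ = w.2 j := by
      rw [← Fin.zero_succAbove j, Fin.insertNth_apply_succAbove]
    have h2 : Fin.insertNth (α := fun _ => ℝ) 0 w'.1 w'.2 j.succ = w'.2 j := by
      rw [← Fin.zero_succAbove j, Fin.insertNth_apply_succAbove]
    dsimp only
    rw [h1, h2]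
    exact hw.2 j

lemma owen_harris_pi : ∀ (m : ℕ) (ν : Fin m → Measure ℝ), (∀ i, IsProbabilityMeasure (ν i)) →
    ∀ (f g : (Fin m → ℝ) → ℝ≥0∞), Measurable f → Measurable g →
    (∀ x, f x ≤ 1) → (∀ x, g x ≤ 1) → Antitone f → Monotone g →
    ∫⁻ x, f x * g x ∂(Measure.pi ν)
      ≤ (∫⁻ x, f x ∂(Measure.pi ν)) * ∫⁻ x, g x ∂(Measure.pi ν) := by
  intro m
  induction m with
  | zero =>
    intro ν hν f g hf hg hf1 hg1 hfa hgm
    haveI := hν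
    haveI : IsProbabilityMeasure (Measure.pi ν) := MeasureTheory.Measure.pi.instIsProbabilityMeasure _
    have hfc : f = fun _ => f default := funext fun x => by rw [Subsingleton.elim x default]
    have hgc : g = fun _ => g default := funext fun x => by rw [Subsingleton.elim x default]
    rw [hfc, hgc, lintegral_const, lintegral_const, lintegral_const, measure_univ]
    simp
  | succ n ih =>
    intro ν hν f g hf hg hf1 hg1 hfa hgm
    haveI := hν
    set e := MeasurableEquiv.piFinSuccAbove (fun _ : Fin (n + 1) => ℝ) 0 with he
    have mp := measurePreserving_piFinSuccAbove ν 0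
    set ν' : Fin n → Measure ℝ := fun j => ν (Fin.succAbove 0 j) with hν'
    haveI : ∀ j, IsProbabilityMeasure (ν' j) := fun j => hν _
    set π' : Measure (ℝ × (Fin n → ℝ)) := (ν 0).prod (Measure.pi ν') with hπ'
    -- e.symm is the insertNth map, which is monotone
    have hesymm : ∀ w : ℝ × (Fin n → ℝ), e.symm w = Fin.insertNth 0 w.1 w.2 := by
      intro w; rfl
    have hmono : Monotone (fun w : ℝ × (Fin n → ℝ) => e.symm w) := by
      simp only [hesymm]; exact owen_insertNth_mono
    have hmeas_symm : Measurable (e.symm : ℝ × (Fin n → ℝ) → (Fin (n+1) → ℝ)) :=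
      e.symm.measurable
    -- transfer integrals
    have transfer : ∀ (h : (Fin (n+1) → ℝ) → ℝ≥0∞), Measurable h →
        ∫⁻ x, h x ∂(Measure.pi ν) = ∫⁻ w, h (e.symm w) ∂π' := by
      intro h hh
      exact ((mp.symm e).lintegral_comp hh).symm
    set F : (Fin n → ℝ) → ℝ≥0∞ := fun p => ∫⁻ x, f (e.symm (x, p)) ∂(ν 0) with hF
    set G : (Fin n → ℝ) → ℝ≥0∞ := fun p => ∫⁻ x, g (e.symm (x, p)) ∂(ν 0) with hG
    have hFmeas : Measurable F := by
      apply Measurable.lintegral_prod_left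
      exact hf.comp hmeas_symm
    have hGmeas : Measurable G := by
      apply Measurable.lintegral_prod_left
      exact hg.comp hmeas_symm
    have hF1 : ∀ p, F p ≤ 1 := by
      intro p
      calc F p ≤ ∫⁻ _, 1 ∂(ν 0) := lintegral_mono fun x => hf1 _
        _ = 1 := by simp
    have hG1 : ∀ p, G p ≤ 1 := by
      intro p
      calc G p ≤ ∫⁻ _, 1 ∂(ν 0) := lintegral_mono fun x => hg1 _
        _ = 1 := by simp
    have hFa : Antitone F := fun p q hpq =>
      lintegral_mono fun x => hfa (hmono (by exact ⟨le_refl x, hpq⟩))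
    have hGm : Monotone G := fun p q hpq =>
      lintegral_mono fun x => hgm (hmono (by exact ⟨le_refl x, hpq⟩))
    have step1 : ∫⁻ x, f x * g x ∂(Measure.pi ν)
        = ∫⁻ p, ∫⁻ x, f (e.symm (x, p)) * g (e.symm (x, p)) ∂(ν 0) ∂(Measure.pi ν') := by
      rw [transfer (fun x => f x * g x) (hf.mul hg)]
      exact lintegral_prod_symm' _ ((hf.comp hmeas_symm).mul (hg.comp hmeas_symm))
    have step2 : ∫⁻ p, ∫⁻ x, f (e.symm (x, p)) * g (e.symm (x, p)) ∂(ν 0) ∂(Measure.pi ν')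
        ≤ ∫⁻ p, F p * G p ∂(Measure.pi ν') := by
      refine lintegral_mono fun p => ?_
      refine owen_harris_one (ν 0) _ _ ?_ ?_ (fun x => hf1 _) (fun x => hg1 _) ?_ ?_
      · exact (hf.comp hmeas_symm).comp (measurable_id.prodMk measurable_const)
      · exact (hg.comp hmeas_symm).comp (measurable_id.prodMk measurable_const)
      · exact fun x y hxy => hfa (hmono ⟨hxy, le_refl p⟩)
      · exact fun x y hxy => hgm (hmono ⟨hxy, le_refl p⟩)
    have step3 : ∫⁻ p, F p * G p ∂(Measure.pi ν')
        ≤ (∫⁻ p, F p ∂(Measure.pi ν')) * ∫⁻ p, G p ∂(Measure.pi ν') :=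
      ih ν' (fun j => hν _) F G hFmeas hGmeas hF1 hG1 hFa hGm
    have hFint : ∫⁻ p, F p ∂(Measure.pi ν') = ∫⁻ x, f x ∂(Measure.pi ν) := by
      rw [transfer _ hf]
      exact (lintegral_prod_symm' _ (hf.comp hmeas_symm)).symm
    have hGint : ∫⁻ p, G p ∂(Measure.pi ν') = ∫⁻ x, g x ∂(Measure.pi ν) := by
      rw [transfer _ hg]
      exact (lintegral_prod_symm' _ (hg.comp hmeas_symm)).symm
    calc ∫⁻ x, f x * g x ∂(Measure.pi ν)
        ≤ ∫⁻ p, F p * G p ∂(Measure.pi ν') := step1 ▸ step2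
      _ ≤ (∫⁻ p, F p ∂(Measure.pi ν')) * ∫⁻ p, G p ∂(Measure.pi ν') := step3
      _ = _ := by rw [hFint, hGint]


/-- Lemma 4 of Owen (2009): for `X = (X 1, ..., X m)` with independent components taking
values in `(0,1)`, `Q^L = -2 log ∏ X j` and `Q^R = -2 log ∏ (1 - X j)`, for any
`A_L > 0` and `A_R > 0`,
`Pr(Q^L > A_L, Q^R > A_R) ≤ Pr(Q^L > A_L) * Pr(Q^R > A_R)`. -/
theorem stmt3 {Ω : Type*} [MeasurableSpace Ω] (μ : Measure Ω) [IsProbabilityMeasure μ]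
    (m : ℕ) (X : Fin m → Ω → ℝ)
    (hmeas : ∀ j, Measurable (X j))
    (hindep : iIndepFun X μ)
    (hrange : ∀ j ω, X j ω ∈ Set.Ioo (0 : ℝ) 1)
    (QL QR : Ω → ℝ)
    (hQL : ∀ ω, QL ω = -2 * Real.log (∏ j, X j ω))
    (hQR : ∀ ω, QR ω = -2 * Real.log (∏ j, (1 - X j ω)))
    (AL AR : ℝ) (hAL : 0 < AL) (hAR : 0 < AR) :
    (μ {ω | QL ω > AL ∧ QR ω > AR}).toReal ≤
      (μ {ω | QL ω > AL}).toReal * (μ {ω | QR ω > AR}).toReal := by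
  classical
  set T : Ω → (Fin m → ℝ) := fun ω j => X j ω with hT
  have hTmeas : Measurable T := measurable_pi_lambda _ hmeas
  set ν : Fin m → Measure ℝ := fun j => μ.map (X j) with hνdef
  haveI hνprob : ∀ j, IsProbabilityMeasure (ν j) :=
    fun j => Measure.isProbabilityMeasure_map (hmeas j).aemeasurable
  haveI : ∀ j, SigmaFinite (ν j) := fun j => by have := hνprob j; infer_instance
  -- joint law is the product of the marginals
  have hmap : μ.map T = Measure.pi ν := by
    refine (Measure.pi_eq (μ := ν) fun s hs => ?_).symm
    rw [Measure.map_apply hTmeas (MeasurableSet.univ_pi hs)]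
    have hpre : T ⁻¹' Set.pi Set.univ s = ⋂ i ∈ Finset.univ, X i ⁻¹' s i := by
      ext ω; simp [Set.mem_pi, hT]
    rw [hpre, hindep.measure_inter_preimage_eq_mul Finset.univ (fun i _ => hs i)]
    exact Finset.prod_congr rfl fun i _ =>
      (Measure.map_apply (hmeas i) (hs i)).symm
  -- the monotone product functions
  set P : (Fin m → ℝ) → ℝ := fun x => ∏ j, max 0 (x j) with hPdef
  set R : (Fin m → ℝ) → ℝ := fun x => ∏ j, max 0 (1 - x j) with hRdef
  have hPmono : Monotone P := by
    intro x y hxy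
    exact Finset.prod_le_prod (fun j _ => le_max_left _ _)
      (fun j _ => max_le_max le_rfl (hxy j))
  have hRanti : Antitone R := by
    intro x y hxy
    exact Finset.prod_le_prod (fun j _ => le_max_left _ _)
      (fun j _ => max_le_max le_rfl (by linarith [hxy j]))
  have hPmeas : Measurable P :=
    Finset.measurable_prod _ fun j _ => measurable_const.max (measurable_pi_apply j)
  have hRmeas : Measurable R :=
    Finset.measurable_prod _ fun j _ =>
      measurable_const.max (measurable_const.sub (measurable_pi_apply j))
  set A : Set (Fin m → ℝ) := {x | P x < Real.exp (-(AL / 2))} with hAdef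
  set B : Set (Fin m → ℝ) := {x | R x < Real.exp (-(AR / 2))} with hBdef
  have hAmeas : MeasurableSet A := measurableSet_lt hPmeas measurable_const
  have hBmeas : MeasurableSet B := measurableSet_lt hRmeas measurable_const
  -- identification of the events
  have hevL : {ω | QL ω > AL} = T ⁻¹' A := by
    ext ω
    have hprod : P (T ω) = ∏ j, X j ω :=
      Finset.prod_congr rfl fun j _ => max_eq_right (hrange j ω).1.le
    have hpos : (0 : ℝ) < ∏ j, X j ω := Finset.prod_pos fun j _ => (hrange j ω).1
    simp only [Set.mem_setOf_eq, Set.mem_preimage, hAdef, Set.mem_setOf_eq, hprod, hQL]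
    rw [← Real.log_lt_iff_lt_exp hpos]
    constructor <;> intro h <;> linarith
  have hevR : {ω | QR ω > AR} = T ⁻¹' B := by
    ext ω
    have hprod : R (T ω) = ∏ j, (1 - X j ω) :=
      Finset.prod_congr rfl fun j _ => max_eq_right (by linarith [(hrange j ω).2])
    have hpos : (0 : ℝ) < ∏ j, (1 - X j ω) :=
      Finset.prod_pos fun j _ => by linarith [(hrange j ω).2]
    simp only [Set.mem_setOf_eq, Set.mem_preimage, hBdef, Set.mem_setOf_eq, hprod, hQR]
    rw [← Real.log_lt_iff_lt_exp hpos]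
    constructor <;> intro h <;> linarith
  have hevLR : {ω | QL ω > AL ∧ QR ω > AR} = T ⁻¹' (A ∩ B) := by
    rw [show {ω | QL ω > AL ∧ QR ω > AR} = {ω | QL ω > AL} ∩ {ω | QR ω > AR} from rfl,
      hevL, hevR, Set.preimage_inter]
  -- indicators
  set f : (Fin m → ℝ) → ℝ≥0∞ := A.indicator 1 with hfdef
  set g : (Fin m → ℝ) → ℝ≥0∞ := B.indicator 1 with hgdef
  have hfa : Antitone f := by
    intro x y hxy
    by_cases hy : y ∈ A
    · have hx : x ∈ A := by
        simp only [hAdef, Set.mem_setOf_eq] at hy ⊢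
        exact lt_of_le_of_lt (hPmono hxy) hy
      simp [hfdef, Set.indicator_of_mem, hx, hy]
    · simp [hfdef, Set.indicator_of_notMem hy]
  have hgm : Monotone g := by
    intro x y hxy
    by_cases hx : x ∈ B
    · have hy : y ∈ B := by
        simp only [hBdef, Set.mem_setOf_eq] at hx ⊢
        exact lt_of_le_of_lt (hRanti hxy) hx
      simp [hgdef, Set.indicator_of_mem, hx, hy]
    · simp [hgdef, Set.indicator_of_notMem hx]
  have hfmeas : Measurable f := measurable_const.indicator hAmeas
  have hgmeas : Measurable g := measurable_const.indicator hBmeas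
  have hf1 : ∀ x, f x ≤ 1 := fun x => by
    by_cases h : x ∈ A <;> simp [hfdef, h]
  have hg1 : ∀ x, g x ≤ 1 := fun x => by
    by_cases h : x ∈ B <;> simp [hgdef, h]
  -- apply Harris
  have hharris := owen_harris_pi m ν hνprob f g hfmeas hgmeas hf1 hg1 hfa hgm
  have hfg : (fun x => f x * g x) = (A ∩ B).indicator 1 := by
    funext x
    rw [hfdef, hgdef]
    exact (congrFun Set.inter_indicator_one x).symm
  have hintf : ∫⁻ x, f x ∂(Measure.pi ν) = Measure.pi ν A := by
    rw [hfdef]; exact lintegral_indicator_one hAmeas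
  have hintg : ∫⁻ x, g x ∂(Measure.pi ν) = Measure.pi ν B := by
    rw [hgdef]; exact lintegral_indicator_one hBmeas
  have hintfg : ∫⁻ x, f x * g x ∂(Measure.pi ν) = Measure.pi ν (A ∩ B) := by
    calc ∫⁻ x, f x * g x ∂(Measure.pi ν) = ∫⁻ x, (A ∩ B).indicator 1 x ∂(Measure.pi ν) := by
          rw [hfg]
      _ = Measure.pi ν (A ∩ B) := lintegral_indicator_one (hAmeas.inter hBmeas)
  rw [hintf, hintg, hintfg] at hharris
  -- translate back to μ
  have hμL : μ {ω | QL ω > AL} = Measure.pi ν A := by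
    rw [hevL, ← hmap, Measure.map_apply hTmeas hAmeas]
  have hμR : μ {ω | QR ω > AR} = Measure.pi ν B := by
    rw [hevR, ← hmap, Measure.map_apply hTmeas hBmeas]
  have hμLR : μ {ω | QL ω > AL ∧ QR ω > AR} = Measure.pi ν (A ∩ B) := by
    rw [hevLR, ← hmap, Measure.map_apply hTmeas (hAmeas.inter hBmeas)]
  rw [hμL, hμR, hμLR]
  haveI : IsProbabilityMeasure (Measure.pi ν) := Measure.pi.instIsProbabilityMeasure _
  rw [← ENNReal.toReal_mul]
  refine ENNReal.toReal_mono ?_ hharris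
  exact ENNReal.mul_ne_top (measure_ne_top _ _) (measure_ne_top _ _)
end

section
/- Independent random variables are associated: if X_1, ..., X_n are independent real random variables and f, g : ℝⁿ → ℝ are both nondecreasing in each coordinate, then Cov(f(X), g(X)) ≥ 0, provided the covariance is defined. -/
open MeasureTheory ProbabilityTheory Filter

section aux

lemma integrable_of_bdd {α : Type*} [MeasurableSpace α] {ν : Measure α} [IsFiniteMeasure ν]
    {F : α → ℝ} (hF : Measurable F) (C : ℝ) (hb : ∀ x, |F x| ≤ C) : Integrable F ν := by
  refine ⟨hF.aestronglyMeasurable, ?_⟩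
  exact HasFiniteIntegral.of_bounded (C := C) (Filter.Eventually.of_forall fun x => hb x)

/-- One-dimensional Chebyshev integral inequality for bounded monotone functions. -/
lemma cheb1 {α : Type*} [MeasurableSpace α] [Preorder α] (ν : Measure α) [IsProbabilityMeasure ν]
    (hlin : ∀ x y : α, x ≤ y ∨ y ≤ x)
    (F G : α → ℝ) (hFm : Measurable F) (hGm : Measurable G)
    (hF : Monotone F) (hG : Monotone G) (C : ℝ)
    (hFb : ∀ x, |F x| ≤ C) (hGb : ∀ x, |G x| ≤ C) :
    (∫ x, F x ∂ν) * (∫ x, G x ∂ν) ≤ ∫ x, F x * G x ∂ν := by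
  have hFi : Integrable F ν := integrable_of_bdd hFm C hFb
  have hGi : Integrable G ν := integrable_of_bdd hGm C hGb
  have hFGi : Integrable (fun x => F x * G x) ν :=
    integrable_of_bdd (hFm.mul hGm) (C * C) (fun x => by
      rw [abs_mul]
      exact mul_le_mul (hFb x) (hGb x) (abs_nonneg _) ((abs_nonneg _).trans (hFb x)))
  set IF := ∫ x, F x ∂ν
  set IG := ∫ x, G x ∂ν
  set IFG := ∫ x, F x * G x ∂ν
  -- inner integral computation
  have inner : ∀ x, ∫ y, (F x - F y) * (G x - G y) ∂ν
      = F x * G x - F x * IG - G x * IF + IFG := by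
    intro x
    have h1 : Integrable (fun y => F x * G x - F x * G y) ν :=
      (integrable_const _).sub (hGi.const_mul _)
    have h2 : Integrable (fun y => G x * F y) ν := hFi.const_mul _
    have : (fun y => (F x - F y) * (G x - G y))
        = fun y => (F x * G x - F x * G y) - G x * F y + F y * G y := by
      funext y; ring
    have h12 : Integrable (fun y => F x * G x - F x * G y - G x * F y) ν := h1.sub h2
    rw [this, integral_add h12 hFGi, integral_sub h1 h2,
      integral_sub (integrable_const _) (hGi.const_mul _), integral_const,
      integral_const_mul, integral_const_mul]
    simp [IF, IG, IFG]
  have hnn : ∀ x, 0 ≤ ∫ y, (F x - F y) * (G x - G y) ∂ν := by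
    intro x
    refine integral_nonneg fun y => ?_
    simp only [Pi.zero_apply]
    rcases hlin x y with h | h
    · nlinarith [hF h, hG h]
    · nlinarith [hF h, hG h]
  have houter : 0 ≤ ∫ x, (F x * G x - F x * IG - G x * IF + IFG) ∂ν := by
    refine integral_nonneg fun x => ?_
    rw [← inner x]; exact hnn x
  have hcalc : ∫ x, (F x * G x - F x * IG - G x * IF + IFG) ∂ν
      = IFG - IF * IG - IG * IF + IFG := by
    have e1 : Integrable (fun x => F x * G x - F x * IG) ν := hFGi.sub (hFi.mul_const _)
    have e2 : Integrable (fun x => F x * G x - F x * IG - G x * IF) ν := e1.sub (hGi.mul_const _)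
    rw [integral_add e2 (integrable_const _),
      integral_sub e1 (hGi.mul_const _),
      integral_sub hFGi (hFi.mul_const _), integral_mul_const, integral_mul_const, integral_const]
    simp [IF, IG, IFG]
  rw [hcalc] at houter
  nlinarith [houter]

lemma insertNth_mono {n : ℕ} (i : Fin (n + 1)) :
    Monotone (fun z : ℝ × (Fin n → ℝ) => Fin.insertNth (α := fun _ => ℝ) i z.1 z.2) := by
  rintro ⟨x, p⟩ ⟨x', p'⟩ ⟨h1, h2⟩
  rw [Fin.insertNth_le_iff]
  constructor
  · simpa using h1
  · intro j; simpa using h2 j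

/-- The key inequality for bounded monotone functions on a product of probability
measures on `ℝ`. -/
lemma key : ∀ (n : ℕ) (μ : Fin n → Measure ℝ), (∀ i, IsProbabilityMeasure (μ i)) →
    ∀ (f g : (Fin n → ℝ) → ℝ), Measurable f → Measurable g → Monotone f → Monotone g →
    ∀ C : ℝ, (∀ x, |f x| ≤ C) → (∀ x, |g x| ≤ C) →
    (∫ x, f x ∂Measure.pi μ) * (∫ x, g x ∂Measure.pi μ) ≤ ∫ x, f x * g x ∂Measure.pi μ := by
  intro n
  induction n with
  | zero =>
    intro μ hμ f g hfm hgm hf hg C hfb hgb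
    haveI := hμ
    haveI : IsProbabilityMeasure (Measure.pi μ) := inferInstance
    have hfc : f = fun _ => f default := by
      funext x; congr 1; exact Subsingleton.elim _ _
    have hgc : g = fun _ => g default := by
      funext x; congr 1; exact Subsingleton.elim _ _
    rw [hfc, hgc]
    simp
  | succ n ih =>
    intro μ hμ f g hfm hgm hf hg C hfb hgb
    haveI := hμ
    haveI : ∀ i, IsProbabilityMeasure ((fun j => μ (Fin.succAbove 0 j)) i) := fun i => hμ _
    set ν := μ 0
    set π : Measure (Fin n → ℝ) := Measure.pi (fun j => μ (Fin.succAbove 0 j)) with hπ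
    haveI : IsProbabilityMeasure π := inferInstance
    set e := MeasurableEquiv.piFinSuccAbove (fun _ : Fin (n + 1) => ℝ) 0
    have mp : MeasurePreserving e (Measure.pi μ) (ν.prod π) :=
      measurePreserving_piFinSuccAbove μ 0
    have hsymm : ∀ z : ℝ × (Fin n → ℝ), e.symm z = Fin.insertNth (α := fun _ => ℝ) 0 z.1 z.2 := fun z => rfl
    set f' : ℝ × (Fin n → ℝ) → ℝ := fun z => f (Fin.insertNth (α := fun _ => ℝ) 0 z.1 z.2) with hf'
    set g' : ℝ × (Fin n → ℝ) → ℝ := fun z => g (Fin.insertNth (α := fun _ => ℝ) 0 z.1 z.2) with hg'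
    have hf'm : Measurable f' := hfm.comp e.symm.measurable
    have hg'm : Measurable g' := hgm.comp e.symm.measurable
    have hf'mono : Monotone f' := hf.comp (insertNth_mono 0)
    have hg'mono : Monotone g' := hg.comp (insertNth_mono 0)
    -- transfer integrals to the product measure
    have hint : ∀ (h : (Fin (n+1) → ℝ) → ℝ), Measurable h →
        ∫ x, h x ∂Measure.pi μ = ∫ z, h (e.symm z) ∂ν.prod π := by
      intro h hm
      rw [← (MeasurePreserving.symm e mp).map_eq, integral_map e.symm.measurable.aemeasurable hm.aestronglyMeasurable]
    -- conditional expectations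
    set F : ℝ → ℝ := fun x => ∫ y, f' (x, y) ∂π with hF
    set G : ℝ → ℝ := fun x => ∫ y, g' (x, y) ∂π with hG
    set H : ℝ → ℝ := fun x => ∫ y, f' (x, y) * g' (x, y) ∂π with hH
    have hFm : Measurable F := (hf'm.stronglyMeasurable.integral_prod_right').measurable
    have hGm : Measurable G := (hg'm.stronglyMeasurable.integral_prod_right').measurable
    have hHm : Measurable H :=
      ((hf'm.mul hg'm).stronglyMeasurable.integral_prod_right').measurable
    have hCnn : 0 ≤ C := (abs_nonneg _).trans (hfb default)
    have hbnd : ∀ (h : ℝ × (Fin n → ℝ) → ℝ) (D : ℝ), (∀ z, |h z| ≤ D) →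
        ∀ x, |∫ y, h (x, y) ∂π| ≤ D := by
      intro h D hD x
      have h1 : ‖∫ y, h (x, y) ∂π‖ ≤ D * (π Set.univ).toReal :=
        norm_integral_le_of_norm_le_const (Filter.Eventually.of_forall fun y => by
          simpa [Real.norm_eq_abs] using hD (x, y))
      simpa [Real.norm_eq_abs] using h1
    have hFb : ∀ x, |F x| ≤ C := hbnd f' C (fun z => hfb _)
    have hGb : ∀ x, |G x| ≤ C := hbnd g' C (fun z => hgb _)
    have hfgb : ∀ z, |f' z * g' z| ≤ C * C := fun z => by
      rw [abs_mul]
      exact mul_le_mul (hfb _) (hgb _) (abs_nonneg _) hCnn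
    have hFmono : Monotone F := by
      intro x x' hxx'
      refine integral_mono (integrable_of_bdd (hf'm.comp (measurable_prodMk_left)) C
        (fun y => hfb _)) (integrable_of_bdd (hf'm.comp (measurable_prodMk_left)) C
        (fun y => hfb _)) (fun y => hf'mono ⟨hxx', le_rfl⟩)
    have hGmono : Monotone G := by
      intro x x' hxx'
      refine integral_mono (integrable_of_bdd (hg'm.comp (measurable_prodMk_left)) C
        (fun y => hgb _)) (integrable_of_bdd (hg'm.comp (measurable_prodMk_left)) C
        (fun y => hgb _)) (fun y => hg'mono ⟨hxx', le_rfl⟩)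
    -- induction hypothesis pointwise
    have hIH : ∀ x, F x * G x ≤ H x := by
      intro x
      exact ih (fun j => μ (Fin.succAbove 0 j)) (fun i => hμ _)
        (fun y => f' (x, y)) (fun y => g' (x, y))
        (hf'm.comp measurable_prodMk_left) (hg'm.comp measurable_prodMk_left)
        (fun y y' hy => hf'mono ⟨le_rfl, hy⟩) (fun y y' hy => hg'mono ⟨le_rfl, hy⟩)
        C (fun y => hfb _) (fun y => hgb _)
    -- Fubini
    have hfF : ∫ x, f x ∂Measure.pi μ = ∫ x, F x ∂ν := by
      rw [hint f hfm]
      exact integral_prod _ (integrable_of_bdd hf'm C (fun z => hfb _))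
    have hgG : ∫ x, g x ∂Measure.pi μ = ∫ x, G x ∂ν := by
      rw [hint g hgm]
      exact integral_prod _ (integrable_of_bdd hg'm C (fun z => hgb _))
    have hfgH : ∫ x, f x * g x ∂Measure.pi μ = ∫ x, H x ∂ν := by
      rw [hint (fun x => f x * g x) (hfm.mul hgm)]
      exact integral_prod _ (integrable_of_bdd (hf'm.mul hg'm) (C * C) hfgb)
    rw [hfF, hgG, hfgH]
    calc (∫ x, F x ∂ν) * (∫ x, G x ∂ν) ≤ ∫ x, F x * G x ∂ν :=
          cheb1 ν (fun x y => le_total x y) F G hFm hGm hFmono hGmono C hFb hGb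
      _ ≤ ∫ x, H x ∂ν := by
          refine integral_mono (integrable_of_bdd (hFm.mul hGm) (C * C) (fun x => by
            rw [abs_mul]; exact mul_le_mul (hFb x) (hGb x) (abs_nonneg _) hCnn))
            (integrable_of_bdd hHm (C * C) (hbnd _ (C * C) hfgb)) hIH

/-- Truncation. -/
noncomputable def trunc (M : ℝ) (t : ℝ) : ℝ := max (min t M) (-M)

lemma trunc_mono (M : ℝ) : Monotone (trunc M) :=
  fun _ _ h => max_le_max (min_le_min h le_rfl) le_rfl

lemma trunc_measurable (M : ℝ) : Measurable (trunc M) :=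
  (measurable_id.min measurable_const).max measurable_const

lemma abs_trunc_le (M : ℝ) (hM : 0 ≤ M) (t : ℝ) : |trunc M t| ≤ M := by
  unfold trunc
  rw [abs_le]
  exact ⟨le_max_right _ _, max_le (min_le_right _ _) (by linarith)⟩

lemma abs_trunc_le_abs (M : ℝ) (hM : 0 ≤ M) (t : ℝ) : |trunc M t| ≤ |t| := by
  unfold trunc
  rw [abs_le]
  refine ⟨le_trans (le_min (neg_abs_le t) (by linarith [abs_nonneg t])) (le_max_left _ _),
    max_le (le_trans (min_le_left _ _) (le_abs_self t)) (by linarith [abs_nonneg t])⟩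

lemma trunc_tendsto (t : ℝ) : Tendsto (fun M : ℕ => trunc M t) atTop (nhds t) := by
  refine tendsto_const_nhds.congr' ?_
  filter_upwards [eventually_ge_atTop ⌈|t|⌉₊] with M hM
  have h1 : |t| ≤ (M : ℝ) := le_trans (Nat.le_ceil _) (by exact_mod_cast hM)
  rw [abs_le] at h1
  unfold trunc
  rw [min_eq_left h1.2, max_eq_left h1.1]

/-- The pi-measure version with integrability hypotheses. -/
lemma pi_version (n : ℕ) (μ : Fin n → Measure ℝ) (hμ : ∀ i, IsProbabilityMeasure (μ i))
    (f g : (Fin n → ℝ) → ℝ) (hfm : Measurable f) (hgm : Measurable g)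
    (hf : Monotone f) (hg : Monotone g)
    (hfi : Integrable f (Measure.pi μ)) (hgi : Integrable g (Measure.pi μ))
    (hfgi : Integrable (fun x => f x * g x) (Measure.pi μ)) :
    (∫ x, f x ∂Measure.pi μ) * (∫ x, g x ∂Measure.pi μ) ≤ ∫ x, f x * g x ∂Measure.pi μ := by
  haveI := hμ
  set P := Measure.pi μ
  set fM : ℕ → (Fin n → ℝ) → ℝ := fun M x => trunc M (f x) with hfM
  set gM : ℕ → (Fin n → ℝ) → ℝ := fun M x => trunc M (g x) with hgM
  have hstep : ∀ M : ℕ, (∫ x, fM M x ∂P) * (∫ x, gM M x ∂P) ≤ ∫ x, fM M x * gM M x ∂P := by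
    intro M
    exact key n μ hμ (fM M) (gM M)
      ((trunc_measurable M).comp hfm) ((trunc_measurable M).comp hgm)
      ((trunc_mono M).comp hf) ((trunc_mono M).comp hg)
      M (fun x => abs_trunc_le M (Nat.cast_nonneg M) _)
      (fun x => abs_trunc_le M (Nat.cast_nonneg M) _)
  have hMn : ∀ M : ℕ, (0:ℝ) ≤ M := fun M => Nat.cast_nonneg M
  have htf : Tendsto (fun M : ℕ => ∫ x, fM M x ∂P) atTop (nhds (∫ x, f x ∂P)) := by
    refine tendsto_integral_of_dominated_convergence (fun x => |f x|)
      (fun M => (((trunc_measurable M).comp hfm)).aestronglyMeasurable) hfi.abs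
      (fun M => Filter.Eventually.of_forall fun x => ?_)
      (Filter.Eventually.of_forall fun x => trunc_tendsto (f x))
    simpa using abs_trunc_le_abs M (hMn M) (f x)
  have htg : Tendsto (fun M : ℕ => ∫ x, gM M x ∂P) atTop (nhds (∫ x, g x ∂P)) := by
    refine tendsto_integral_of_dominated_convergence (fun x => |g x|)
      (fun M => (((trunc_measurable M).comp hgm)).aestronglyMeasurable) hgi.abs
      (fun M => Filter.Eventually.of_forall fun x => ?_)
      (Filter.Eventually.of_forall fun x => trunc_tendsto (g x))
    simpa using abs_trunc_le_abs M (hMn M) (g x)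
  have htfg : Tendsto (fun M : ℕ => ∫ x, fM M x * gM M x ∂P) atTop
      (nhds (∫ x, f x * g x ∂P)) := by
    refine tendsto_integral_of_dominated_convergence (fun x => |f x * g x|)
      (fun M => (((trunc_measurable M).comp hfm).mul
        ((trunc_measurable M).comp hgm)).aestronglyMeasurable) hfgi.abs
      (fun M => Filter.Eventually.of_forall fun x => ?_)
      (Filter.Eventually.of_forall fun x => ((trunc_tendsto (f x)).mul (trunc_tendsto (g x))))
    have : ‖fM M x * gM M x‖ = |trunc M (f x)| * |trunc M (g x)| := by
      simp [fM, gM, abs_mul]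
    rw [this]
    show _ ≤ |f x * g x|
    rw [abs_mul]
    exact mul_le_mul (abs_trunc_le_abs M (hMn M) _) (abs_trunc_le_abs M (hMn M) _)
      (abs_nonneg _) (abs_nonneg _)
  exact le_of_tendsto_of_tendsto' (htf.mul htg) htfg hstep

/-- Esary–Proschan–Walkup: independent random variables are associated. If
`X 1, ..., X n` are independent real random variables and `f, g : ℝⁿ → ℝ` are
nondecreasing in each coordinate, then `Cov(f(X), g(X)) ≥ 0`, provided the
covariance is defined (i.e. `f(X)`, `g(X)` and their product are integrable). -/
theorem stmt4 {Ω : Type*} [MeasurableSpace Ω] (μ : Measure Ω) [IsProbabilityMeasure μ]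
    (n : ℕ) (X : Fin n → Ω → ℝ)
    (hmeas : ∀ i, Measurable (X i))
    (hindep : iIndepFun X μ)
    (f g : (Fin n → ℝ) → ℝ)
    (hfm : Measurable f) (hgm : Measurable g)
    (hf : Monotone f) (hg : Monotone g)
    (hfint : Integrable (fun ω => f (fun i => X i ω)) μ)
    (hgint : Integrable (fun ω => g (fun i => X i ω)) μ)
    (hfgint : Integrable (fun ω => f (fun i => X i ω) * g (fun i => X i ω)) μ) :
    (∫ ω, f (fun i => X i ω) ∂μ) * (∫ ω, g (fun i => X i ω) ∂μ) ≤
      ∫ ω, f (fun i => X i ω) * g (fun i => X i ω) ∂μ := by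
  set Y : Ω → (Fin n → ℝ) := fun ω i => X i ω with hY
  have hYm : Measurable Y := measurable_pi_lambda _ hmeas
  have hmap : Measure.map Y μ = Measure.pi (fun i => μ.map (X i)) := by
    symm
    apply Measure.pi_eq
    intro s hs
    rw [Measure.map_apply hYm (MeasurableSet.univ_pi hs)]
    have hpre : Y ⁻¹' (Set.pi Set.univ s) = ⋂ i ∈ Finset.univ, X i ⁻¹' s i := by
      ext ω; simp [Y, Set.mem_pi]
    rw [hpre, hindep.measure_inter_preimage_eq_mul Finset.univ (fun i _ => hs i)]
    exact Finset.prod_congr rfl fun i _ => (Measure.map_apply (hmeas i) (hs i)).symm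
  haveI : ∀ i, IsProbabilityMeasure (μ.map (X i)) :=
    fun i => Measure.isProbabilityMeasure_map (hmeas i).aemeasurable
  have h1 : ∫ ω, f (fun i => X i ω) ∂μ = ∫ x, f x ∂Measure.pi (fun i => μ.map (X i)) := by
    rw [← hmap, integral_map hYm.aemeasurable hfm.aestronglyMeasurable]
  have h2 : ∫ ω, g (fun i => X i ω) ∂μ = ∫ x, g x ∂Measure.pi (fun i => μ.map (X i)) := by
    rw [← hmap, integral_map hYm.aemeasurable hgm.aestronglyMeasurable]
  have h3 : ∫ ω, f (fun i => X i ω) * g (fun i => X i ω) ∂μ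
      = ∫ x, f x * g x ∂Measure.pi (fun i => μ.map (X i)) := by
    rw [← hmap, integral_map (f := fun x => f x * g x) hYm.aemeasurable (hfm.mul hgm).aestronglyMeasurable]
  rw [h1, h2, h3]
  refine pi_version n _ (fun i => inferInstance) f g hfm hgm hf hg ?_ ?_ ?_
  · rw [← hmap]
    exact (integrable_map_measure hfm.aestronglyMeasurable hYm.aemeasurable).mpr hfint
  · rw [← hmap]
    exact (integrable_map_measure hgm.aestronglyMeasurable hYm.aemeasurable).mpr hgint
  · rw [← hmap]
    exact (integrable_map_measure (hfm.mul hgm).aestronglyMeasurable hYm.aemeasurable).mpr hfgint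
end aux
end
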